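/- arXiv:2009.11535 — 4 statements merged into one kernel-verified Lean document; each statement's English description precedes it below -/
import Mathlib

section
/- For all real numbers a, b ≥ 0 and every α ≥ 1, one has (a^(2α-1) + b^(2α-1))·|a - b| ≤ |a^α - b^α|·(a^α + b^α). -/
lemma key_aux (a b : ℝ) (ha : 0 ≤ a) (hb : 0 ≤ b) (α : ℝ) (hα : 1 ≤ α)
    (hba : b ≤ a) :
    (a ^ (2 * α - 1) + b ^ (2 * α - 1)) * |a - b| ≤
      |a ^ α - b ^ α| * (a ^ α + b ^ α) := by
  have hα0 : (0:ℝ) ≤ α := le_trans zero_le_one hα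
  have hpow : b ^ α ≤ a ^ α := Real.rpow_le_rpow hb hba hα0
  rw [abs_of_nonneg (by linarith), abs_of_nonneg (by linarith)]
  rcases eq_or_lt_of_le hb with hb0 | hb0
  · subst hb0
    rw [Real.zero_rpow (ne_of_gt (by linarith)), Real.zero_rpow (ne_of_gt (by linarith))]
    have h3 : a ^ (2 * α - 1) * a = a ^ (2 * α) := by
      nth_rewrite 2 [show a = a ^ (1:ℝ) by rw [Real.rpow_one]]
      rw [← Real.rpow_add' ha (by ring_nf; linarith)]
      ring_nf
    have h1 : a ^ α * a ^ α = a ^ (2 * α) := by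
      rw [← Real.rpow_add' ha (by linarith)]
      ring_nf
    nlinarith
  · have ha0 : 0 < a := lt_of_lt_of_le hb0 hba
    have h1 : a ^ α * a ^ α = a ^ (2 * α) := by
      rw [← Real.rpow_add ha0]; ring_nf
    have h2 : b ^ α * b ^ α = b ^ (2 * α) := by
      rw [← Real.rpow_add hb0]; ring_nf
    have h3 : a ^ (2 * α - 1) * a = a ^ (2 * α) := by
      nth_rewrite 2 [show a = a ^ (1:ℝ) by rw [Real.rpow_one]]
      rw [← Real.rpow_add ha0]; ring_nf
    have h4 : b ^ (2 * α - 1) * b = b ^ (2 * α) := by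
      nth_rewrite 2 [show b = b ^ (1:ℝ) by rw [Real.rpow_one]]
      rw [← Real.rpow_add hb0]; ring_nf
    have h5 : a * b ^ (2 * α - 1) ≤ b * a ^ (2 * α - 1) := by
      have he : b ^ (2 * α - 2) ≤ a ^ (2 * α - 2) :=
        Real.rpow_le_rpow hb hba (by linarith)
      have ha5 : a ^ (2 * α - 1) = a * a ^ (2 * α - 2) := by
        nth_rewrite 2 [show a = a ^ (1:ℝ) by rw [Real.rpow_one]]
        rw [← Real.rpow_add ha0]; ring_nf
      have hb5 : b ^ (2 * α - 1) = b * b ^ (2 * α - 2) := by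
        nth_rewrite 2 [show b = b ^ (1:ℝ) by rw [Real.rpow_one]]
        rw [← Real.rpow_add hb0]; ring_nf
      rw [ha5, hb5]
      calc a * (b * b ^ (2 * α - 2)) = a * b * b ^ (2 * α - 2) := by ring
        _ ≤ a * b * a ^ (2 * α - 2) := by
            apply mul_le_mul_of_nonneg_left he (by positivity)
        _ = b * (a * a ^ (2 * α - 2)) := by ring
    nlinarith

theorem stmt_0 (a b : ℝ) (ha : 0 ≤ a) (hb : 0 ≤ b) (α : ℝ) (hα : 1 ≤ α) :
    (a ^ (2 * α - 1) + b ^ (2 * α - 1)) * |a - b| ≤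
      |a ^ α - b ^ α| * (a ^ α + b ^ α) := by
  rcases le_total b a with h | h
  · exact key_aux a b ha hb α hα h
  · have := key_aux b a hb ha α hα h
    rw [abs_sub_comm b a, abs_sub_comm (b^α) (a^α)] at this
    linarith
end

section
/- For all real numbers a, b ≥ 0 and every real α > 1/2, one has (a^α - b^α)^2 ≤ (α^2/(2α-1))·(a - b)·(a^(2α-1) - b^(2α-1)). -/
open MeasureTheory intervalIntegral Set

lemma stmt_1_aux (a b : ℝ) (hb : 0 ≤ b) (hba : b ≤ a) (α : ℝ) (hα : 1 / 2 < α) :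
    (a ^ α - b ^ α) ^ 2 ≤
      α ^ 2 / (2 * α - 1) * ((a - b) * (a ^ (2 * α - 1) - b ^ (2 * α - 1))) := by
  have ha : 0 ≤ a := hb.trans hba
  have h1 : (-1 : ℝ) < α - 1 := by linarith
  have h2 : (-1 : ℝ) < 2 * α - 2 := by linarith
  have hα0 : (0 : ℝ) < α := by linarith
  have h2α : (0 : ℝ) < 2 * α - 1 := by linarith
  set μ := volume.restrict (Ioc b a) with hμ
  set f : ℝ → ℝ := fun x => x ^ (α - 1) with hf
  have hmeas : AEStronglyMeasurable f μ := by
    have := intervalIntegral.intervalIntegrable_rpow' (a := b) (b := a) h1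
    exact ((intervalIntegrable_iff_integrableOn_Ioc_of_le hba).mp this).aestronglyMeasurable
  have haeq : ∀ᵐ x ∂μ, f x ^ 2 = x ^ (2 * α - 2) := by
    filter_upwards [ae_restrict_mem measurableSet_Ioc] with x hx
    have hx0 : 0 ≤ x := le_trans hb hx.1.le
    rw [hf]
    rw [← Real.rpow_natCast (x ^ (α - 1)) 2, ← Real.rpow_mul hx0]
    norm_num
    ring_nf
  have hint2 : IntegrableOn (fun x : ℝ => x ^ (2 * α - 2)) (Ioc b a) volume := by
    have := intervalIntegral.intervalIntegrable_rpow' (a := b) (b := a) h2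
    exact (intervalIntegrable_iff_integrableOn_Ioc_of_le hba).mp this
  have hmem : MemLp f 2 μ := by
    rw [memLp_two_iff_integrable_sq hmeas]
    exact hint2.congr (haeq.mono fun x hx => hx.symm)
  have hmem1 : MemLp (fun _ : ℝ => (1 : ℝ)) 2 μ := memLp_const 1
  have hconj : Real.HolderConjugate 2 2 := Real.HolderConjugate.two_two
  have hfnonneg : 0 ≤ᵐ[μ] f := by
    filter_upwards [ae_restrict_mem measurableSet_Ioc] with x hx
    exact Real.rpow_nonneg (le_trans hb hx.1.le) _
  have hCS := MeasureTheory.integral_mul_le_Lp_mul_Lq_of_nonneg hconj hfnonneg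
    (Filter.Eventually.of_forall fun _ => zero_le_one)
    (by simpa using hmem) (by simpa using hmem1)
  simp only [mul_one] at hCS
  -- compute the pieces
  have e1 : ∫ x, f x ∂μ = (a ^ α - b ^ α) / α := by
    rw [hμ, ← intervalIntegral.integral_of_le hba, hf,
      integral_rpow (Or.inl h1)]
    norm_num
  have e2 : ∫ x, f x ^ (2 : ℝ) ∂μ = (a ^ (2 * α - 1) - b ^ (2 * α - 1)) / (2 * α - 1) := by
    have : ∫ x, f x ^ (2 : ℝ) ∂μ = ∫ x, x ^ (2 * α - 2) ∂μ := by
      refine integral_congr_ae ?_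
      filter_upwards [haeq] with x hx
      rw [← hx]
      rw [← Real.rpow_natCast (f x) 2]
      norm_num
    rw [this, hμ, ← intervalIntegral.integral_of_le hba,
      integral_rpow (Or.inl h2)]
    ring_nf
  have e3 : ∫ _x, (1 : ℝ) ^ (2 : ℝ) ∂μ = a - b := by
    simp [hμ, Real.volume_Ioc, ENNReal.toReal_ofReal (by linarith : (0:ℝ) ≤ a - b), hba]
  rw [e1, e2, e3] at hCS
  have hA : 0 ≤ (a ^ α - b ^ α) / α := by
    have : b ^ α ≤ a ^ α := Real.rpow_le_rpow hb hba hα0.le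
    apply div_nonneg (by linarith) hα0.le
  have hB : 0 ≤ (a ^ (2 * α - 1) - b ^ (2 * α - 1)) / (2 * α - 1) := by
    have : b ^ (2 * α - 1) ≤ a ^ (2 * α - 1) := Real.rpow_le_rpow hb hba h2α.le
    apply div_nonneg (by linarith) h2α.le
  have hC : (0 : ℝ) ≤ a - b := by linarith
  have key : ((a ^ α - b ^ α) / α) ^ 2 ≤
      (a ^ (2 * α - 1) - b ^ (2 * α - 1)) / (2 * α - 1) * (a - b) := by
    calc ((a ^ α - b ^ α) / α) ^ 2
        ≤ (((a ^ (2 * α - 1) - b ^ (2 * α - 1)) / (2 * α - 1)) ^ ((1:ℝ)/2) *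
            (a - b) ^ ((1:ℝ)/2)) ^ 2 := by
          apply pow_le_pow_left₀ hA hCS
      _ = ((a ^ (2 * α - 1) - b ^ (2 * α - 1)) / (2 * α - 1)) ^ (((1:ℝ)/2) * 2) *
            (a - b) ^ (((1:ℝ)/2) * 2) := by
          rw [mul_pow, ← Real.rpow_natCast (_ ^ ((1:ℝ)/2)) 2,
            ← Real.rpow_natCast ((a - b) ^ ((1:ℝ)/2)) 2,
            ← Real.rpow_mul hB, ← Real.rpow_mul hC]
          norm_num
      _ = _ := by norm_num
  have := mul_le_mul_of_nonneg_left key (sq_nonneg α)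
  calc (a ^ α - b ^ α) ^ 2
      = α ^ 2 * (((a ^ α - b ^ α) / α) ^ 2) := by
        field_simp
    _ ≤ α ^ 2 * ((a ^ (2 * α - 1) - b ^ (2 * α - 1)) / (2 * α - 1) * (a - b)) := this
    _ = α ^ 2 / (2 * α - 1) * ((a - b) * (a ^ (2 * α - 1) - b ^ (2 * α - 1))) := by
        ring

theorem stmt_1 (a b : ℝ) (ha : 0 ≤ a) (hb : 0 ≤ b) (α : ℝ) (hα : 1 / 2 < α) :
    (a ^ α - b ^ α) ^ 2 ≤
      α ^ 2 / (2 * α - 1) * ((a - b) * (a ^ (2 * α - 1) - b ^ (2 * α - 1))) := by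
  rcases le_total b a with h | h
  · exact stmt_1_aux a b hb h α hα
  · calc (a ^ α - b ^ α) ^ 2
        = (b ^ α - a ^ α) ^ 2 := by ring
      _ ≤ α ^ 2 / (2 * α - 1) * ((b - a) * (b ^ (2 * α - 1) - a ^ (2 * α - 1))) :=
          stmt_1_aux b a ha h α hα
      _ = α ^ 2 / (2 * α - 1) * ((a - b) * (a ^ (2 * α - 1) - b ^ (2 * α - 1))) := by
          ring
end

section
/- Define g : (0,∞) → ℝ by g(z) = -log z for z ∈ (0, c̄], g(z) = (z-1)²/(2c̄(1-c̄)) for z ∈ (c̄, 1], and g(z) = 0 for z ≥ 1, where c̄ ∈ [1/4, 1/3] is the smallest solution of 2c·log(1/c) = 1 - c. Then g is nonnegative, non-increasing, and convex on (0,∞). -/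
theorem stmt_7 (c : ℝ) (hc : c ∈ Set.Icc (1/4 : ℝ) (1/3))
    (hroot : 2 * c * Real.log (1 / c) = 1 - c)
    (hmin : ∀ c' : ℝ, 0 < c' → 2 * c' * Real.log (1 / c') = 1 - c' → c ≤ c')
    (g : ℝ → ℝ)
    (hg : g = fun z => if z ≤ c then -Real.log z
      else if z ≤ 1 then (z - 1) ^ 2 / (2 * c * (1 - c)) else 0) :
    (∀ z ∈ Set.Ioi (0 : ℝ), 0 ≤ g z) ∧
      AntitoneOn g (Set.Ioi (0 : ℝ)) ∧
      ConvexOn ℝ (Set.Ioi (0 : ℝ)) g := by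
  obtain ⟨hc4, hc3⟩ := hc
  have hc0 : (0:ℝ) < c := by linarith
  have hc1 : c < 1 := by linarith
  have hd0 : (0:ℝ) < c * (1 - c) := by nlinarith
  -- value of log c
  have hcne : c ≠ 0 := ne_of_gt hc0
  have h1cne : (1:ℝ) - c ≠ 0 := by linarith
  have hlog : Real.log c = -((1 - c) / (2 * c)) := by
    rw [one_div, Real.log_inv] at hroot
    field_simp
    linarith
  -- continuity at c : -log c = Q c
  have hQc : -Real.log c = (c - 1) ^ 2 / (2 * c * (1 - c)) := by
    have h2 : (c - 1) ^ 2 / (2 * c * (1 - c)) = (1 - c) / (2 * c) := by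
      rw [div_eq_div_iff (by positivity) (by positivity)]
      ring
    rw [hlog, h2, neg_neg]
  set φ : ℝ → ℝ := fun z => if z ≤ c then -z⁻¹ else if z ≤ 1 then (z - 1) / (c * (1 - c)) else 0
    with hφ
  -- derivative of the quadratic piece
  have hQ : ∀ z : ℝ, HasDerivAt (fun z : ℝ => (z - 1) ^ 2 / (2 * c * (1 - c)))
      ((z - 1) / (c * (1 - c))) z := by
    intro z
    have h1 : HasDerivAt (fun z : ℝ => (z - 1) ^ 2) (2 * (z - 1)) z := by
      have := ((hasDerivAt_id z).sub_const 1).pow 2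
      exact this.congr_deriv (by simp)
    have := h1.div_const (2 * c * (1 - c))
    refine this.congr_deriv ?_
    rw [div_eq_div_iff (by positivity) (by positivity)]
    ring
  have hd : ∀ z ∈ Set.Ioi (0:ℝ), HasDerivAt g (φ z) z := by
    intro z hz
    simp only [Set.mem_Ioi] at hz
    rcases lt_trichotomy z c with h | h | h
    · -- z < c : g = -log near z
      have hL : HasDerivAt (fun z : ℝ => -Real.log z) (-z⁻¹) z :=
        (Real.hasDerivAt_log hz.ne').neg
      have heq : g =ᶠ[nhds z] fun z : ℝ => -Real.log z := by
        filter_upwards [Iio_mem_nhds h] with x hx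
        simp [hg, le_of_lt (Set.mem_Iio.1 hx)]
      have : HasDerivAt g (-z⁻¹) z := hL.congr_of_eventuallyEq heq
      simpa [hφ, le_of_lt h] using this
    · -- z = c
      subst h
      have h1 : HasDerivWithinAt g (-z⁻¹) (Set.Iic z) z := by
        have hL : HasDerivAt (fun z : ℝ => -Real.log z) (-z⁻¹) z :=
          (Real.hasDerivAt_log hz.ne').neg
        exact (hL.hasDerivWithinAt).congr (fun x hx => by simp [hg, Set.mem_Iic.1 hx])
          (by simp [hg])
      have h2 : HasDerivWithinAt g (-z⁻¹) (Set.Icc z 1) z := by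
        have := (hQ z).hasDerivWithinAt (s := Set.Icc z 1)
        have hzne : z ≠ 0 := ne_of_gt hz
        have heq : (z - 1) / (z * (1 - z)) = -z⁻¹ := by
          field_simp
          ring
        rw [heq] at this
        refine this.congr (fun x hx => ?_) (by simp [hg, hQc])
        rcases eq_or_lt_of_le hx.1 with rfl | hlt
        · simp [hg, hQc]
        · simp [hg, not_le.2 hlt, hx.2]
      have h3 := h1.union h2
      have hset : Set.Iic z ∪ Set.Icc z 1 = Set.Iic 1 := by
        ext x
        simp only [Set.mem_union, Set.mem_Iic, Set.mem_Icc]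
        constructor
        · rintro (h | ⟨_, h⟩) <;> [exact le_trans h (le_of_lt hc1); exact h]
        · intro h; rcases le_total x z with h' | h' <;> tauto
      rw [hset] at h3
      have := h3.hasDerivAt (Iic_mem_nhds hc1)
      simpa [hφ] using this
    · rcases lt_trichotomy z 1 with h1 | h1 | h1
      · -- c < z < 1
        have heq : g =ᶠ[nhds z] fun z : ℝ => (z - 1) ^ 2 / (2 * c * (1 - c)) := by
          filter_upwards [Ioo_mem_nhds h h1] with x hx
          simp [hg, not_le.2 (Set.mem_Ioo.1 hx).1, le_of_lt (Set.mem_Ioo.1 hx).2]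
        have := (hQ z).congr_of_eventuallyEq heq
        simpa [hφ, not_le.2 h, le_of_lt h1] using this
      · -- z = 1
        subst h1
        have gIcc : ∀ x ∈ Set.Icc c (1:ℝ), (fun z : ℝ => (z - 1) ^ 2 / (2 * c * (1 - c))) x = g x := by
          intro x hx
          rcases eq_or_lt_of_le hx.1 with rfl | hlt
          · simp [hg, hQc]
          · simp [hg, not_le.2 hlt, hx.2]
        have h1 : HasDerivWithinAt g 0 (Set.Icc c 1) (1:ℝ) := by
          have := (hQ 1).hasDerivWithinAt (s := Set.Icc c 1)
          simp only [sub_self, zero_div] at this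
          exact this.congr (fun x hx => (gIcc x hx).symm)
            (by simp [hg, not_le.2 hc1])
        have h2 : HasDerivWithinAt g 0 (Set.Ici (1:ℝ)) 1 := by
          have : HasDerivWithinAt (fun _ : ℝ => (0:ℝ)) 0 (Set.Ici (1:ℝ)) 1 :=
            (hasDerivAt_const _ _).hasDerivWithinAt
          refine this.congr (fun x hx => ?_) (by simp [hg, not_le.2 hc1])
          have hx1 : (1:ℝ) ≤ x := hx
          rcases eq_or_lt_of_le hx1 with rfl | hlt
          · simp [hg, not_le.2 hc1]
          · simp [hg, not_le.2 (lt_trans hc1 hlt), not_le.2 hlt]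
        have h3 := h1.union h2
        have hset : Set.Icc c 1 ∪ Set.Ici (1:ℝ) = Set.Ici c := by
          ext x
          simp only [Set.mem_union, Set.mem_Icc, Set.mem_Ici]
          constructor
          · rintro (⟨h, _⟩ | h) <;> [exact h; linarith]
          · intro h; rcases le_total x 1 with h' | h' <;> tauto
        rw [hset] at h3
        have := h3.hasDerivAt (Ici_mem_nhds hc1)
        simpa [hφ, not_le.2 hc1] using this
      · -- z > 1
        have heq : g =ᶠ[nhds z] fun _ : ℝ => (0:ℝ) := by
          filter_upwards [Ioi_mem_nhds h1] with x hx
          have hx1 : (1:ℝ) < x := hx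
          simp [hg, not_le.2 (lt_trans hc1 hx1), not_le.2 hx1]
        have := (hasDerivAt_const z (0:ℝ)).congr_of_eventuallyEq heq
        simpa [hφ, not_le.2 (lt_trans hc1 h1), not_le.2 h1] using this
    -- (end hd)
  have hdiff : DifferentiableOn ℝ g (Set.Ioi (0:ℝ)) :=
    fun z hz => ((hd z hz).differentiableAt).differentiableWithinAt
  have hcont : ContinuousOn g (Set.Ioi (0:ℝ)) := hdiff.continuousOn
  have hderiv : ∀ z ∈ Set.Ioi (0:ℝ), deriv g z = φ z := fun z hz => (hd z hz).deriv
  have hint : interior (Set.Ioi (0:ℝ)) = Set.Ioi 0 := interior_Ioi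
  have hφmono : ∀ x ∈ Set.Ioi (0:ℝ), ∀ y ∈ Set.Ioi (0:ℝ), x ≤ y → φ x ≤ φ y := by
    intro x hx y hy hxy
    simp only [Set.mem_Ioi] at hx hy
    simp only [hφ]
    split_ifs with h1 h2 h3 h4 h5
    all_goals try linarith
    all_goals try { have h := one_div_le_one_div_of_le hx hxy; rw [one_div, one_div] at h; linarith }
    all_goals try { rw [div_le_div_iff₀ hd0 hd0]; nlinarith }
    all_goals try { rw [show -x⁻¹ = (-1)/x from by rw [neg_div, one_div], div_le_div_iff₀ hx hd0]; nlinarith }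
    all_goals try { have h := inv_pos.2 hx; linarith }
    all_goals { apply div_nonpos_of_nonpos_of_nonneg <;> linarith }
  refine ⟨?_, ?_, ?_⟩
  · intro z hz
    simp only [Set.mem_Ioi] at hz
    rw [hg]
    simp only
    split_ifs with h1 h2
    · have : Real.log z ≤ 0 := Real.log_nonpos (le_of_lt hz) (by linarith)
      linarith
    · exact div_nonneg (by positivity) (by nlinarith)
    · exact le_rfl
  · refine antitoneOn_of_deriv_nonpos (convex_Ioi 0) hcont (by rwa [hint]) ?_
    intro x hx
    rw [hint] at hx
    rw [hderiv x hx]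
    simp only [Set.mem_Ioi] at hx
    simp only [hφ]
    split_ifs with h1 h2
    · have : (0:ℝ) < x⁻¹ := inv_pos.2 hx
      linarith
    · apply div_nonpos_of_nonpos_of_nonneg <;> [linarith; linarith]
    · exact le_rfl
  · refine MonotoneOn.convexOn_of_deriv (convex_Ioi 0) hcont (by rwa [hint]) ?_
    rw [hint]
    intro x hx y hy hxy
    rw [hderiv x hx, hderiv y hy]
    exact hφmono x hx y hy hxy
end

section
/- Let g be as defined via c̄ ∈ [1/4, 1/3]: g(z) = -log z on (0, c̄], g(z) = (z-1)²/(2c̄(1-c̄)) on (c̄, 1], g(z) = 0 on [1,∞). Then for almost every r > 0 (i.e., for all r ≠ c̄, r ≠ 1), one has (1/3)·g'(r)² ≤ g''(r) and -r·g'(r) ≤ 4/3. -/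
lemma my_deriv_eqOn {g f : ℝ → ℝ} {s : Set ℝ} (hs : IsOpen s) (h : Set.EqOn g f s)
    {r : ℝ} (hr : r ∈ s) : deriv g r = deriv f r :=
  Filter.EventuallyEq.deriv_eq (by filter_upwards [hs.mem_nhds hr] with z hz using h hz)

theorem stmt_9 (c : ℝ) (hc : c ∈ Set.Icc (1/4 : ℝ) (1/3))
    (hroot : 2 * c * Real.log (1 / c) = 1 - c)
    (g : ℝ → ℝ)
    (hg : g = fun z => if z ≤ c then -Real.log z
      else if z ≤ 1 then (z - 1) ^ 2 / (2 * c * (1 - c)) else 0) :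
    ∀ r : ℝ, 0 < r → r ≠ c → r ≠ 1 →
      (1 / 3) * (deriv g r) ^ 2 ≤ deriv (deriv g) r ∧ -r * deriv g r ≤ 4 / 3 := by
  obtain ⟨hc1, hc2⟩ := hc
  have hcpos : (0:ℝ) < c := by linarith
  have hKpos : (0:ℝ) < 2 * c * (1 - c) := by nlinarith
  -- region 1 : derivative on Ioo 0 c
  have e1 : ∀ z ∈ Set.Ioo (0:ℝ) c, deriv g z = -z⁻¹ := by
    intro z hz
    have heq : deriv g z = deriv (fun z => -Real.log z) z := by
      apply my_deriv_eqOn isOpen_Ioo _ hz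
      intro w hw
      simp [hg, hw.2.le]
    rw [heq]; exact ((Real.hasDerivAt_log hz.1.ne').neg).deriv
  -- region 2 : derivative on Ioo c 1
  have e2 : ∀ z ∈ Set.Ioo c (1:ℝ), deriv g z = 2 * (z - 1) / (2 * c * (1 - c)) := by
    intro z hz
    have heq : deriv g z = deriv (fun z => (z - 1) ^ 2 / (2 * c * (1 - c))) z := by
      apply my_deriv_eqOn isOpen_Ioo _ hz
      intro w hw
      simp [hg, not_le.mpr hw.1, hw.2.le]
    have hd : HasDerivAt (fun z : ℝ => (z - 1) ^ 2 / (2 * c * (1 - c)))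
        (2 * (z - 1) / (2 * c * (1 - c))) z := by
      have h1 : HasDerivAt (fun z : ℝ => (z - 1) ^ 2) (2 * (z - 1)) z := by
        simpa using ((hasDerivAt_id z).sub_const 1).fun_pow 2
      exact h1.div_const _
    rw [heq, hd.deriv]
  -- region 3 : derivative on Ioi 1
  have e3 : ∀ z ∈ Set.Ioi (1:ℝ), deriv g z = 0 := by
    intro z hz
    have heq : deriv g z = deriv (fun _ : ℝ => (0:ℝ)) z := by
      apply my_deriv_eqOn isOpen_Ioi _ hz
      intro w hw
      have hw1 : ¬ w ≤ 1 := not_le.mpr hw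
      have hwc : ¬ w ≤ c := by push_neg at hw1 ⊢; linarith
      simp [hg, hw1, hwc]
    rw [heq, deriv_const]
  intro r hr hrc hr1
  rcases lt_trichotomy r c with h | h | h
  · -- r < c
    have hrm : r ∈ Set.Ioo (0:ℝ) c := ⟨hr, h⟩
    have hd1 : deriv g r = -r⁻¹ := e1 r hrm
    have hd2 : deriv (deriv g) r = (r ^ 2)⁻¹ := by
      have heq : deriv (deriv g) r = deriv (fun z : ℝ => -z⁻¹) r :=
        my_deriv_eqOn isOpen_Ioo (fun w hw => e1 w hw) hrm
      rw [heq, show (fun z : ℝ => -z⁻¹) = -(fun y : ℝ => y⁻¹) from rfl, (hasDerivAt_inv hr.ne').neg.deriv]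
      ring
    rw [hd1, hd2]
    constructor
    · have h1 : (1/3 : ℝ) * (-r⁻¹) ^ 2 ≤ (r⁻¹) ^ 2 := by nlinarith [sq_nonneg r⁻¹]
      calc (1/3 : ℝ) * (-r⁻¹) ^ 2 ≤ (r⁻¹) ^ 2 := h1
        _ = (r ^ 2)⁻¹ := by rw [inv_pow]
    · have : -r * -r⁻¹ = 1 := by field_simp
      rw [this]; norm_num
  · exact absurd h hrc
  · rcases lt_trichotomy r 1 with h1 | h1 | h1
    · -- c < r < 1
      have hrm : r ∈ Set.Ioo c (1:ℝ) := ⟨h, h1⟩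
      have hd1 : deriv g r = 2 * (r - 1) / (2 * c * (1 - c)) := e2 r hrm
      have hd2 : deriv (deriv g) r = 2 / (2 * c * (1 - c)) := by
        have heq : deriv (deriv g) r =
            deriv (fun z : ℝ => 2 * (z - 1) / (2 * c * (1 - c))) r :=
          my_deriv_eqOn isOpen_Ioo (fun w hw => e2 w hw) hrm
        have hd : HasDerivAt (fun z : ℝ => 2 * (z - 1) / (2 * c * (1 - c)))
            (2 / (2 * c * (1 - c))) r := by
          have h2 : HasDerivAt (fun z : ℝ => 2 * (z - 1)) 2 r := by
            simpa using ((hasDerivAt_id r).sub_const 1).const_mul (2:ℝ)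
          exact h2.div_const _
        rw [heq, hd.deriv]
      rw [hd1, hd2]
      have hcc : (3:ℝ)/16 ≤ c * (1 - c) := by nlinarith
      have key : (r - 1) ^ 2 ≤ 3 * (c * (1 - c)) := by
        nlinarith [mul_nonneg (by linarith : (0:ℝ) ≤ r - c) (by linarith : (0:ℝ) ≤ 2 - r - c),
          mul_nonneg (by linarith : (0:ℝ) ≤ 1 - c) (by linarith : (0:ℝ) ≤ 4 * c - 1)]
      constructor
      · rw [div_pow, ← mul_div_assoc, div_le_div_iff₀ (by positivity) hKpos]
        nlinarith [mul_le_mul_of_nonneg_left key hKpos.le]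
      · have heq : -r * (2 * (r - 1) / (2 * c * (1 - c)))
            = 2 * r * (1 - r) / (2 * c * (1 - c)) := by ring
        rw [heq, div_le_iff₀ hKpos]
        nlinarith [sq_nonneg (r - 1/2), hcc]
    · exact absurd h1 hr1
    · -- r > 1
      have hd1 : deriv g r = 0 := e3 r h1
      have hd2 : deriv (deriv g) r = 0 := by
        have heq : deriv (deriv g) r = deriv (fun _ : ℝ => (0:ℝ)) r :=
          my_deriv_eqOn isOpen_Ioi (fun w hw => e3 w hw) h1
        rw [heq, deriv_const]
      rw [hd1, hd2]
      norm_num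
end
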